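/- For every n×n matrix A over the max-plus semiring there exists a vector x ∈ R̄^n with x ≠ ε (i.e., not all components equal to ε) such that A⊗x = λ(A)⊗x, where λ(A) is the maximum cycle mean of A. -/

import Mathlib

/-!  Max-plus (tropical) semiring `MP = ℝ ∪ {ε}`, `ε = -∞ = ⊥`,
`a ⊕ b = max a b` and `a ⊗ b = a + b`. -/

abbrev MP := WithBot ℝ

/-- Tropical (max-plus) matrix product: `(A ⊗ B) i j = max_k (A i k + B k j)`. -/
noncomputable def mpMul {α β γ : Type*} [Fintype β] (A : Matrix α β MP) (B : Matrix β γ MP) :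
    Matrix α γ MP :=
  fun i j => Finset.univ.sup fun k => A i k + B k j

/-- Tropical matrix-vector product: `(A ⊗ x) i = max_k (A i k + x k)`. -/
noncomputable def mpMulVec {α β : Type*} [Fintype β] (A : Matrix α β MP) (x : β → MP) : α → MP :=
  fun i => Finset.univ.sup fun k => A i k + x k

/-- Diagonal matrix with finite diagonal entries `d i` and off-diagonal entries `ε`. -/
noncomputable def mpDiag {α : Type*} [DecidableEq α] (d : α → ℝ) : Matrix α α MP :=
  fun i j => if i = j then (d i : MP) else ⊥

/-- Tropical permanent: `maper A = max_{π} Σ_i A i (π i)`. -/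
noncomputable def maper {α : Type*} [Fintype α] [DecidableEq α] (A : Matrix α α MP) : MP :=
  Finset.univ.sup fun π : Equiv.Perm α => ∑ i, A i (π i)

/-- Maximum cycle mean:
`λ(A) = sup { (A i₁ i₂ + A i₂ i₃ + ⋯ + A iₖ i₁)/k : k ≥ 1, i₁,…,iₖ }` (`ε` if none finite). -/
noncomputable def mcm {α : Type*} [Fintype α] (A : Matrix α α MP) : MP :=
  sSup {x : MP | ∃ k : ℕ, ∃ hk : 0 < k, ∃ f : Fin k → α,
    x = WithBot.map (fun w : ℝ => w / (k : ℝ))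
      (∑ i : Fin k, A (f i) (f ⟨(i.1 + 1) % k, Nat.mod_lt _ hk⟩))}

/-- Tropical tensor product `A ⊠ B`: the block matrix whose `(k,l)` block is `A ⊗ B k l`;
the row index `(k, i)` denotes position `i` inside block row `k`. -/
noncomputable def mpTensor {α β γ δ : Type*} (A : Matrix α β MP) (B : Matrix γ δ MP) :
    Matrix (γ × α) (δ × β) MP :=
  fun p q => A p.2 q.2 + B p.1 q.1

/-- Tensor product of column vectors: `(x ⊠ y) (k, i) = x i + y k`. -/
noncomputable def mpTensorVec {α γ : Type*} (x : α → MP) (y : γ → MP) : γ × α → MP :=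
  fun p => x p.2 + y p.1

/-- The tropical unit matrix: `0` on the diagonal, `ε` elsewhere. -/
noncomputable def mpUnit (α : Type*) [DecidableEq α] : Matrix α α MP :=
  fun i j => if i = j then 0 else ⊥

/-- `vec X`: the columns of `X` stacked; component `(c, r)` is `X r c`. -/
def mpVec {α β : Type*} (X : Matrix α β MP) : β × α → MP := fun p => X p.2 p.1

section Helpers
open Finset

/-- weight of the walk `f 0 → f 1 → ⋯ → f k`. -/
noncomputable def wtW {n : ℕ} (B : Matrix (Fin n) (Fin n) MP) (k : ℕ) (f : ℕ → Fin n) : MP :=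
  ∑ i ∈ Finset.range k, B (f i) (f (i+1))

noncomputable def cwtW {n : ℕ} (B : Matrix (Fin n) (Fin n) MP) (k : ℕ) (f : ℕ → Fin n) : MP :=
  ∑ i ∈ Finset.range k, B (f i) (f ((i+1) % k))

/-- cyclic weight of `f 0 → ⋯ → f (k-1) → f 0`. -/

lemma sum_const_coe (k : ℕ) (r : ℝ) :
    (∑ _i ∈ Finset.range k, (r : MP)) = ((k * r : ℝ) : MP) := by
  rw [← WithBot.coe_sum]
  norm_cast
  simp [Finset.sum_const, nsmul_eq_mul]

lemma coe_add_sSup_le {c : ℝ} {S : Set MP} {t : MP} (hne : S.Nonempty)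
    (h : ∀ w ∈ S, (c : MP) + w ≤ t) : (c : MP) + sSup S ≤ t := by
  have h1 : sSup S ≤ ((-c : ℝ) : MP) + t := by
    refine csSup_le hne fun w hw => ?_
    have := add_le_add (le_refl ((-c : ℝ) : MP)) (h w hw)
    calc w = ((-c : ℝ) : MP) + ((c : MP) + w) := by
              rw [← add_assoc, ← WithBot.coe_add]; norm_num
      _ ≤ ((-c : ℝ) : MP) + t := this
  calc (c : MP) + sSup S ≤ (c : MP) + (((-c : ℝ) : MP) + t) := add_le_add le_rfl h1
    _ = t := by rw [← add_assoc, ← WithBot.coe_add]; norm_num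

lemma wt_cons {n : ℕ} (B : Matrix (Fin n) (Fin n) MP) (k : ℕ) (f : ℕ → Fin n) :
    wtW B (k+1) f = B (f 0) (f 1) + wtW B k (fun t => f (t+1)) := by
  unfold wtW
  rw [Finset.sum_range_succ']
  exact add_comm _ _





def mcmSet {α : Type*} [Fintype α] (A : Matrix α α MP) : Set MP :=
  {x : MP | ∃ k : ℕ, ∃ hk : 0 < k, ∃ f : Fin k → α,
    x = WithBot.map (fun w : ℝ => w / (k : ℝ))
      (∑ i : Fin k, A (f i) (f ⟨(i.1 + 1) % k, Nat.mod_lt _ hk⟩))}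

lemma mcm_eq {α : Type*} [Fintype α] (A : Matrix α α MP) : mcm A = sSup (mcmSet A) := rfl

lemma mem_mcmSet_of_walk {n : ℕ} (A : Matrix (Fin n) (Fin n) MP) (k : ℕ) (hk : 0 < k)
    (f : ℕ → Fin n) :
    WithBot.map (fun w : ℝ => w / (k : ℝ)) (cwtW A k f) ∈ mcmSet A := by
  refine ⟨k, hk, fun i => f i.1, ?_⟩
  congr 1
  rw [cwtW, ← Fin.sum_univ_eq_sum_range (fun i => A (f i) (f ((i+1) % k))) k]

lemma bddAbove_mcmSet {n : ℕ} (A : Matrix (Fin n) (Fin n) MP) : BddAbove (mcmSet A) := by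
  set c : MP := (Finset.univ.sup fun p : Fin n × Fin n => A p.1 p.2) ⊔ 0 with hc
  refine ⟨c, fun x hx => ?_⟩
  obtain ⟨k, hk, f, rfl⟩ := hx
  set s := ∑ i : Fin k, A (f i) (f ⟨(i.1 + 1) % k, Nat.mod_lt _ hk⟩) with hs
  rcases hsb : s with _ | w
  · simp [WithBot.map]; exact bot_le
  · -- all summands are ≤ sup of entries, and some summand is not ⊥
    have hterm : ∀ i : Fin k, A (f i) (f ⟨(i.1 + 1) % k, Nat.mod_lt _ hk⟩) ≤ c := by
      intro i
      refine le_trans ?_ le_sup_left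
      exact Finset.le_sup (f := fun p : Fin n × Fin n => A p.1 p.2)
        (Finset.mem_univ (f i, f ⟨(i.1 + 1) % k, Nat.mod_lt _ hk⟩))
    have hcne : c ≠ ⊥ := by
      intro h
      have := le_sup_right (a := Finset.univ.sup fun p : Fin n × Fin n => A p.1 p.2) (b := (0:MP))
      rw [← hc, h] at this
      exact absurd (le_bot_iff.mp this) (by simp)
    obtain ⟨m, hm⟩ := WithBot.ne_bot_iff_exists.mp hcne
    have hsum : s ≤ ∑ _i : Fin k, c := Finset.sum_le_sum fun i _ => hterm i
    rw [hsb, ← hm] at hsum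
    have : (w : MP) ≤ ((k * m : ℝ) : MP) := by
      refine hsum.trans_eq ?_
      rw [Finset.sum_const]
      norm_cast
      simp [nsmul_eq_mul]
    rw [WithBot.coe_le_coe] at this
    have hm0 : (0:MP) ≤ (m : MP) := by rw [hm]; exact le_sup_right
    have hm0' : (0:ℝ) ≤ m := by exact_mod_cast hm0
    have hdiv : w / (k:ℝ) ≤ m := by
      rw [div_le_iff₀ (by exact_mod_cast hk)]
      calc w ≤ k * m := this
        _ = m * k := mul_comm _ _
    calc WithBot.map (fun w : ℝ => w / (k:ℝ)) (w : MP) = ((w / (k:ℝ) : ℝ) : MP) := rfl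
      _ ≤ (m : MP) := by exact_mod_cast hdiv
      _ = c := hm
      _ ≤ c := le_rfl

lemma nonempty_mcmSet {n : ℕ} (hn : 0 < n) (A : Matrix (Fin n) (Fin n) MP) :
    (mcmSet A).Nonempty :=
  ⟨_, ⟨1, one_pos, fun _ => ⟨0, hn⟩, rfl⟩⟩

lemma mean_le_mcm {n : ℕ} (A : Matrix (Fin n) (Fin n) MP) (k : ℕ) (hk : 0 < k)
    (f : ℕ → Fin n) :
    WithBot.map (fun w : ℝ => w / (k : ℝ)) (cwtW A k f) ≤ mcm A :=
  le_csSup (bddAbove_mcmSet A) (mem_mcmSet_of_walk A k hk f)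



lemma splice {n : ℕ} (B : Matrix (Fin n) (Fin n) MP)
    (hcyc : ∀ m (g : ℕ → Fin n), 0 < m → g m = g 0 → wtW B m g ≤ 0)
    (k a d : ℕ) (f : ℕ → Fin n) (hd : 0 < d) (had : a + d ≤ k) (hf : f (a+d) = f a) :
    ∃ g : ℕ → Fin n, g 0 = f 0 ∧ g (k - d) = f k ∧ wtW B k f ≤ wtW B (k - d) g := by
  set g : ℕ → Fin n := fun i => if i ≤ a then f i else f (i + d) with hg
  have hga : ∀ i, a ≤ i → g i = f (i + d) := by
    intro i hi
    rcases eq_or_lt_of_le hi with h | h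
    · simp only [hg, ← h, le_refl, if_pos]; exact hf.symm
    · simp only [hg, if_neg (not_le.mpr h)]
  have hg0 : g 0 = f 0 := by simp [hg]
  have hgk : g (k - d) = f k := by
    have hak : a ≤ k - d := by omega
    rw [hga _ hak]
    congr 1
    omega
  refine ⟨g, hg0, hgk, ?_⟩
  -- decompose wtW B k f
  have e1 : wtW B k f = (∑ i ∈ Finset.Ico 0 a, B (f i) (f (i+1)))
      + ((∑ i ∈ Finset.Ico a (a+d), B (f i) (f (i+1)))
      + (∑ i ∈ Finset.Ico (a+d) k, B (f i) (f (i+1)))) := by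
    rw [wtW, Finset.range_eq_Ico,
      ← Finset.sum_Ico_consecutive _ (Nat.zero_le a) (le_trans (Nat.le_add_right a d) had),
      ← Finset.sum_Ico_consecutive _ (Nat.le_add_right a d) had]
  have e2 : wtW B (k - d) g = (∑ i ∈ Finset.Ico 0 a, B (f i) (f (i+1)))
      + (∑ i ∈ Finset.Ico (a+d) k, B (f i) (f (i+1))) := by
    have hak : a ≤ k - d := by omega
    rw [wtW, Finset.range_eq_Ico, ← Finset.sum_Ico_consecutive _ (Nat.zero_le a) hak]
    congr 1
    · refine Finset.sum_congr rfl fun i hi => ?_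
      rw [Finset.mem_Ico] at hi
      have h1 : g i = f i := if_pos (le_of_lt hi.2)
      have h2 : g (i+1) = f (i+1) := if_pos hi.2
      rw [h1, h2]
    · rw [Finset.sum_Ico_eq_sum_range, Finset.sum_Ico_eq_sum_range]
      have hlen : k - d - a = k - (a + d) := by omega
      rw [hlen]
      refine Finset.sum_congr rfl fun i hi => ?_
      rw [hga _ (Nat.le_add_right a i), hga _ (by omega)]
      congr 2 <;> omega
  -- middle part is a cycle
  have hmid : (∑ i ∈ Finset.Ico a (a+d), B (f i) (f (i+1))) ≤ 0 := by
    have : (∑ i ∈ Finset.Ico a (a+d), B (f i) (f (i+1))) = wtW B d (fun i => f (a + i)) := by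
      rw [wtW, Finset.sum_Ico_eq_sum_range]
      simp only [Nat.add_sub_cancel_left]
      refine Finset.sum_congr rfl fun i _ => ?_
      congr 2 <;> omega
    rw [this]
    exact hcyc d _ hd (by simpa using hf)
  rw [e1, e2]
  refine add_le_add le_rfl ?_
  calc (∑ i ∈ Finset.Ico a (a+d), B (f i) (f (i+1)))
        + (∑ i ∈ Finset.Ico (a+d) k, B (f i) (f (i+1)))
      ≤ 0 + (∑ i ∈ Finset.Ico (a+d) k, B (f i) (f (i+1))) := add_le_add hmid le_rfl
    _ = _ := zero_add _

lemma shorten {n : ℕ} (B : Matrix (Fin n) (Fin n) MP)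
    (hcyc : ∀ m (g : ℕ → Fin n), 0 < m → g m = g 0 → wtW B m g ≤ 0)
    (k : ℕ) : ∀ f : ℕ → Fin n,
    ∃ k' : ℕ, ∃ f' : ℕ → Fin n, k' ≤ n ∧ f' 0 = f 0 ∧ f' k' = f k ∧ wtW B k f ≤ wtW B k' f' := by
  induction k using Nat.strong_induction_on with
  | _ k ih =>
    intro f
    by_cases hk : k ≤ n
    · exact ⟨k, f, hk, rfl, rfl, le_rfl⟩
    push_neg at hk
    -- pigeonhole among f 0 .. f n
    obtain ⟨a, b, hab, hfab⟩ := Fintype.exists_ne_map_eq_of_card_lt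
      (fun i : Fin (n+1) => f i.val) (by simp)
    rcases hab.lt_or_gt with h | h
    · obtain ⟨g, hg0, hgk, hle⟩ := splice B hcyc k a.val (b.val - a.val) f (by omega)
        (by have := b.isLt; omega) (by rw [show a.val + (b.val - a.val) = b.val by omega]; exact hfab.symm)
      obtain ⟨k', f', hk', h0, hk'', hle'⟩ := ih (k - (b.val - a.val)) (by have := b.isLt; omega) g
      exact ⟨k', f', hk', h0.trans hg0, hk''.trans hgk, hle.trans hle'⟩
    · obtain ⟨g, hg0, hgk, hle⟩ := splice B hcyc k b.val (a.val - b.val) f (by omega)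
        (by have := a.isLt; omega) (by rw [show b.val + (a.val - b.val) = a.val by omega]; exact hfab)
      obtain ⟨k', f', hk', h0, hk'', hle'⟩ := ih (k - (a.val - b.val)) (by have := a.isLt; omega) g
      exact ⟨k', f', hk', h0.trans hg0, hk''.trans hgk, hle.trans hle'⟩

lemma cwt_split {n : ℕ} (A : Matrix (Fin n) (Fin n) MP) (k a d : ℕ) (f : ℕ → Fin n)
    (hd : 0 < d) (hbk : a + d < k) (hf : f (a+d) = f a) :
    cwtW A k f = cwtW A d (fun i => f (a+i))
      + cwtW A (k-d) (fun i => if i ≤ a then f i else f (i+d)) := by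
  set g : ℕ → Fin n := fun i => if i ≤ a then f i else f (i + d) with hgdef
  have hga : ∀ i, a ≤ i → g i = f (i + d) := by
    intro i hi
    rcases eq_or_lt_of_le hi with h | h
    · simp only [hgdef, ← h, le_refl, if_pos]; exact hf.symm
    · simp only [hgdef, if_neg (not_le.mpr h)]
  have e1 : cwtW A k f = (∑ i ∈ Finset.Ico 0 a, A (f i) (f ((i+1) % k)))
      + ((∑ i ∈ Finset.Ico a (a+d), A (f i) (f ((i+1) % k)))
      + (∑ i ∈ Finset.Ico (a+d) k, A (f i) (f ((i+1) % k)))) := by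
    rw [cwtW, Finset.range_eq_Ico,
      ← Finset.sum_Ico_consecutive _ (Nat.zero_le a) (by omega : a ≤ k),
      ← Finset.sum_Ico_consecutive _ (Nat.le_add_right a d) (le_of_lt hbk)]
  have emid : (∑ i ∈ Finset.Ico a (a+d), A (f i) (f ((i+1) % k)))
      = cwtW A d (fun i => f (a+i)) := by
    rw [cwtW, Finset.sum_Ico_eq_sum_range]
    simp only [Nat.add_sub_cancel_left]
    refine Finset.sum_congr rfl fun i hi => ?_
    rw [Finset.mem_range] at hi
    have h1 : (a + i + 1) % k = a + i + 1 := Nat.mod_eq_of_lt (by omega)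
    rw [h1]
    by_cases h2 : i + 1 < d
    · have : (i + 1) % d = i + 1 := Nat.mod_eq_of_lt h2
      rw [this]
      congr 2 <;> omega
    · have hid : i + 1 = d := by omega
      have : (i + 1) % d = 0 := by rw [hid, Nat.mod_self]
      rw [this]
      have : f (a + i + 1) = f (a + 0) := by
        rw [show a + i + 1 = a + d by omega, Nat.add_zero]; exact hf
      rw [this]
  have erest : (∑ i ∈ Finset.Ico 0 a, A (f i) (f ((i+1) % k)))
      + (∑ i ∈ Finset.Ico (a+d) k, A (f i) (f ((i+1) % k)))
      = cwtW A (k-d) g := by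
    have hak : a < k - d := by omega
    rw [cwtW, Finset.range_eq_Ico,
      ← Finset.sum_Ico_consecutive _ (Nat.zero_le a) (le_of_lt hak)]
    congr 1
    · refine Finset.sum_congr rfl fun i hi => ?_
      rw [Finset.mem_Ico] at hi
      have h1 : g i = f i := if_pos (le_of_lt hi.2)
      have h2 : g (i+1) = f (i+1) := if_pos hi.2
      have h3 : (i+1) % k = i + 1 := Nat.mod_eq_of_lt (by omega)
      have h4 : (i+1) % (k-d) = i + 1 := Nat.mod_eq_of_lt (by omega)
      rw [h3, h4, h2, h1]
    · rw [Finset.sum_Ico_eq_sum_range, Finset.sum_Ico_eq_sum_range]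
      have hlen : k - (a + d) = k - d - a := by omega
      rw [hlen]
      refine Finset.sum_congr rfl fun i hi => ?_
      rw [Finset.mem_range] at hi
      have hg1 : g (a + i) = f (a + d + i) := by
        rw [hga _ (Nat.le_add_right a i)]; congr 1; omega
      rw [hg1]
      by_cases h2 : a + i + 1 < k - d
      · have m1 : (a + i + 1) % (k - d) = a + i + 1 := Nat.mod_eq_of_lt h2
        have m2 : (a + d + i + 1) % k = a + d + i + 1 := Nat.mod_eq_of_lt (by omega)
        rw [m1, m2, hga _ (by omega)]
        congr 2 <;> omega
      · have hend : a + i + 1 = k - d := by omega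
        have m1 : (a + i + 1) % (k - d) = 0 := by rw [hend, Nat.mod_self]
        have m2 : (a + d + i + 1) % k = 0 := by rw [show a + d + i + 1 = k by omega, Nat.mod_self]
        rw [m1, m2]
        have : g 0 = f 0 := by simp [hgdef]
        rw [this]
  rw [e1, emid, ← erest]
  abel

lemma mediant {u v : ℝ} {d e : ℕ} (hd : 0 < d) (he : 0 < e) :
    (u + v) / ((d : ℝ) + (e : ℝ)) ≤ max (u / d) (v / e) := by
  have hd' : (0:ℝ) < d := by exact_mod_cast hd
  have he' : (0:ℝ) < e := by exact_mod_cast he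
  rcases le_total (u / d) (v / e) with h | h
  · refine le_max_of_le_right ?_
    rw [div_le_div_iff₀ hd' he'] at h
    rw [div_le_div_iff₀ (by linarith) he']
    nlinarith
  · refine le_max_of_le_left ?_
    rw [div_le_div_iff₀ he' hd'] at h
    rw [div_le_div_iff₀ (by linarith) hd']
    nlinarith

lemma key_le_sup {n : ℕ} (hn : 0 < n) (A : Matrix (Fin n) (Fin n) MP) :
    ∀ k : ℕ, 0 < k → ∀ f : ℕ → Fin n,
      WithBot.map (fun w : ℝ => w / (k : ℝ)) (cwtW A k f) ≤
      ((Finset.Icc 1 n) ×ˢ (Finset.univ : Finset (Fin (n+1) → Fin n))).sup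
        (fun p => WithBot.map (fun w : ℝ => w / (p.1 : ℝ))
          (cwtW A p.1 (fun i => p.2 ⟨min i n, by omega⟩))) := by
  intro k
  induction k using Nat.strong_induction_on with
  | _ k ih =>
    intro hk f
    by_cases hkn : k ≤ n
    · -- directly a member
      set g : Fin (n+1) → Fin n := fun i => f (i.val % k) with hgdef
      have hval : cwtW A k (fun i => g ⟨min i n, by omega⟩) = cwtW A k f := by
        unfold cwtW
        refine Finset.sum_congr rfl fun i hi => ?_
        rw [Finset.mem_range] at hi
        have e1 : (g ⟨min i n, by omega⟩ : Fin n) = f i := by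
          simp only [hgdef]
          have h1 : min i n = i := min_eq_left (by omega)
          congr 1
          rw [h1, Nat.mod_eq_of_lt hi]
        have e2 : (g ⟨min ((i+1) % k) n, by omega⟩ : Fin n) = f ((i+1) % k) := by
          simp only [hgdef]
          have hlt : (i+1) % k < k := Nat.mod_lt _ hk
          have h1 : min ((i+1) % k) n = (i+1) % k := min_eq_left (by omega)
          congr 1
          rw [h1, Nat.mod_eq_of_lt hlt]
        show A (g ⟨min i n, by omega⟩) (g ⟨min ((i+1) % k) n, by omega⟩)
            = A (f i) (f ((i+1) % k))
        rw [e1, e2]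
      calc WithBot.map (fun w : ℝ => w / (k : ℝ)) (cwtW A k f)
          = WithBot.map (fun w : ℝ => w / (k : ℝ)) (cwtW A k (fun i => g ⟨min i n, by omega⟩)) := by
            rw [hval]
        _ ≤ _ := by
            have hmem : (k, g) ∈ (Finset.Icc 1 n) ×ˢ
                (Finset.univ : Finset (Fin (n+1) → Fin n)) :=
              Finset.mem_product.mpr ⟨Finset.mem_Icc.mpr ⟨hk, hkn⟩, Finset.mem_univ _⟩
            exact Finset.le_sup (f := fun p : ℕ × (Fin (n+1) → Fin n) =>
              WithBot.map (fun w : ℝ => w / (p.1 : ℝ))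
                (cwtW A p.1 (fun i => p.2 ⟨min i n, by omega⟩))) hmem
    · push_neg at hkn
      obtain ⟨a, b, hab, hfab⟩ := Fintype.exists_ne_map_eq_of_card_lt
        (fun i : Fin (n+1) => f i.val) (by simp)
      -- wlog a < b
      obtain ⟨a, b, hab, hfab⟩ : ∃ a b : ℕ, a < b ∧ b ≤ n ∧ f b = f a := by
        rcases hab.lt_or_gt with h | h
        · exact ⟨a.val, b.val, h, by omega, hfab.symm⟩
        · exact ⟨b.val, a.val, h, by omega, hfab⟩
      obtain ⟨hb, hfab⟩ := hfab
      set d := b - a with hddef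
      have hd : 0 < d := by omega
      have hbk : a + d < k := by omega
      have hsplit := cwt_split A k a d f hd hbk
        (by rw [show a + d = b by omega]; exact hfab)
      set w1 := cwtW A d (fun i => f (a+i)) with hw1def
      set w2 := cwtW A (k-d) (fun i => if i ≤ a then f i else f (i+d)) with hw2def
      have m1 := ih d (by omega) hd (fun i => f (a+i))
      have m2 := ih (k-d) (by omega) (by omega) (fun i => if i ≤ a then f i else f (i+d))
      rcases hc1 : w1 with _ | u
      · rw [hsplit, hc1, WithBot.none_eq_bot, WithBot.bot_add]
        simp
      rcases hc2 : w2 with _ | v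
      · rw [hsplit, hc2, WithBot.none_eq_bot, WithBot.add_bot]
        simp
      rw [hsplit, hc1, hc2, WithBot.some_eq_coe, WithBot.some_eq_coe,
        ← WithBot.coe_add, WithBot.map_coe]
      rw [← hw1def, hc1, WithBot.some_eq_coe, WithBot.map_coe] at m1
      rw [← hw2def, hc2, WithBot.some_eq_coe, WithBot.map_coe] at m2
      have hkd : (k : ℝ) = (d : ℝ) + ((k - d : ℕ) : ℝ) := by
        push_cast [Nat.cast_sub (by omega : d ≤ k)]
        ring
      have hmed : (u + v) / (k : ℝ) ≤ max (u / (d : ℝ)) (v / ((k - d : ℕ) : ℝ)) := by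
        rw [hkd]
        exact mediant hd (by omega)
      rcases le_max_iff.mp hmed with h | h
      · exact le_trans (WithBot.coe_le_coe.mpr h) m1
      · exact le_trans (WithBot.coe_le_coe.mpr h) m2

lemma mcm_attained {n : ℕ} (hn : 0 < n) (A : Matrix (Fin n) (Fin n) MP) (l : ℝ)
    (hA : mcm A = (l : MP)) :
    ∃ k : ℕ, ∃ f : ℕ → Fin n, 0 < k ∧ cwtW A k f = ((k * l : ℝ) : MP) := by
  set μ : ℕ × (Fin (n+1) → Fin n) → MP := fun p =>
    WithBot.map (fun w : ℝ => w / (p.1 : ℝ)) (cwtW A p.1 (fun i => p.2 ⟨min i n, by omega⟩))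
    with hμdef
  set F := (Finset.Icc 1 n) ×ˢ (Finset.univ : Finset (Fin (n+1) → Fin n)) with hFdef
  have hle : mcm A ≤ F.sup μ := by
    rw [mcm_eq]
    refine csSup_le (nonempty_mcmSet hn A) ?_
    rintro x ⟨k, hk, f', rfl⟩
    have hconv : (∑ i : Fin k, A (f' i) (f' ⟨(i.1 + 1) % k, Nat.mod_lt _ hk⟩))
        = cwtW A k (fun i => f' ⟨i % k, Nat.mod_lt _ hk⟩) := by
      rw [cwtW, ← Fin.sum_univ_eq_sum_range
        (fun i => A (f' ⟨i % k, Nat.mod_lt _ hk⟩) (f' ⟨(i+1) % k % k, Nat.mod_lt _ hk⟩)) k]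
      refine Finset.sum_congr rfl fun i _ => ?_
      congr 2
      · exact Fin.ext (Nat.mod_eq_of_lt i.isLt).symm
      · exact Fin.ext (by simp)
    rw [hconv]
    exact key_le_sup hn A k hk _
  have hge : F.sup μ ≤ mcm A := by
    refine Finset.sup_le ?_
    rintro ⟨k, g⟩ hmem
    rw [hFdef, Finset.mem_product, Finset.mem_Icc] at hmem
    exact mean_le_mcm A k (by omega) _
  have heq : mcm A = F.sup μ := le_antisymm hle hge
  have hFne : F.Nonempty :=
    ⟨(1, fun _ => ⟨0, hn⟩), Finset.mem_product.mpr
      ⟨Finset.mem_Icc.mpr ⟨le_rfl, hn⟩, Finset.mem_univ _⟩⟩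
  obtain ⟨p, hp, hsup⟩ := Finset.exists_mem_eq_sup F hFne μ
  rw [hFdef, Finset.mem_product, Finset.mem_Icc] at hp
  have hk0 : 0 < p.1 := by omega
  have hval : (l : MP) = WithBot.map (fun w : ℝ => w / (p.1 : ℝ))
      (cwtW A p.1 (fun i => p.2 ⟨min i n, by omega⟩)) := by rw [← hA, heq, hsup]
  rcases hc : cwtW A p.1 (fun i => p.2 ⟨min i n, by omega⟩) with _ | w
  · rw [hc, WithBot.none_eq_bot, WithBot.map_bot] at hval
    exact absurd hval (by simp)
  · refine ⟨p.1, (fun i => p.2 ⟨min i n, by omega⟩), hk0, ?_⟩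
    rw [hc, WithBot.some_eq_coe, WithBot.map_coe] at hval
    have hl : l = w / (p.1 : ℝ) := by exact_mod_cast hval
    have hp1 : ((p.1 : ℕ) : ℝ) ≠ 0 := Nat.cast_ne_zero.mpr (by omega)
    have hw : w = (p.1 : ℝ) * l := by
      rw [hl]
      field_simp
    rw [hc, WithBot.some_eq_coe]
    exact_mod_cast congrArg (fun r : ℝ => (r : MP)) hw

lemma wt_eq_cwt {n : ℕ} (B : Matrix (Fin n) (Fin n) MP) (k : ℕ) (f : ℕ → Fin n)
    (h : f k = f 0) : wtW B k f = cwtW B k f := by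
  unfold wtW cwtW
  refine Finset.sum_congr rfl fun i hi => ?_
  rw [Finset.mem_range] at hi
  by_cases h2 : i + 1 < k
  · rw [Nat.mod_eq_of_lt h2]
  · have : i + 1 = k := by omega
    rw [this, Nat.mod_self, ← this, this, h]

lemma cwtB_eq {n : ℕ} (A : Matrix (Fin n) (Fin n) MP) (l : ℝ) (k : ℕ) (f : ℕ → Fin n) :
    cwtW (fun i j => A i j + ((-l : ℝ) : MP)) k f
      = cwtW A k f + ((k * (-l) : ℝ) : MP) := by
  unfold cwtW
  rw [Finset.sum_add_distrib, sum_const_coe]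

lemma cwt_le_of_mcm {n : ℕ} (A : Matrix (Fin n) (Fin n) MP) (l : ℝ) (hA : mcm A = (l : MP))
    (k : ℕ) (hk : 0 < k) (f : ℕ → Fin n) : cwtW A k f ≤ ((k * l : ℝ) : MP) := by
  have h := mean_le_mcm A k hk f
  rw [hA] at h
  rcases hc : cwtW A k f with _ | w
  · rw [WithBot.none_eq_bot]; exact bot_le
  · rw [hc, WithBot.some_eq_coe, WithBot.map_coe, WithBot.coe_le_coe] at h
    rw [WithBot.some_eq_coe, WithBot.coe_le_coe]
    have hkpos : (0:ℝ) < (k:ℝ) := by exact_mod_cast hk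
    rw [div_le_iff₀ hkpos] at h
    calc w ≤ l * k := h
      _ = k * l := mul_comm _ _

lemma Bcyc {n : ℕ} (A : Matrix (Fin n) (Fin n) MP) (l : ℝ) (hA : mcm A = (l : MP)) :
    ∀ m (g : ℕ → Fin n), 0 < m →
      g m = g 0 → wtW (fun i j => A i j + ((-l : ℝ) : MP)) m g ≤ 0 := by
  intro m g hm hg
  refine (wt_eq_cwt _ _ _ hg).trans_le ((cwtB_eq A l m g).trans_le ?_)
  calc cwtW A m g + ((m * (-l) : ℝ) : MP)
      ≤ ((m * l : ℝ) : MP) + ((m * (-l) : ℝ) : MP) :=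
        add_le_add (cwt_le_of_mcm A l hA m hm g) le_rfl
    _ = 0 := by
        rw [← WithBot.coe_add]
        norm_cast
        ring

lemma eigen_zero {n : ℕ} (hn : 0 < n) (B : Matrix (Fin n) (Fin n) MP)
    (hcyc : ∀ m (g : ℕ → Fin n), 0 < m → g m = g 0 → wtW B m g ≤ 0)
    (k₀ : ℕ) (fc : ℕ → Fin n) (hk₀ : 0 < k₀) (hfc : fc k₀ = fc 0) (hcrit : wtW B k₀ fc = 0) :
    ∃ x : Fin n → MP, (∃ i, x i ≠ ⊥) ∧
      ∀ i, (Finset.univ.sup fun m => B i m + x m) = x i := by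
  set j₀ := fc 0 with hj₀
  set W : Fin n → Set MP := fun i => {w | ∃ k f, f 0 = i ∧ f k = j₀ ∧ w = wtW B k f} with hW
  obtain ⟨r, hr0, hr⟩ : ∃ r : ℝ, 0 ≤ r ∧ ∀ i j : Fin n, B i j ≤ (r : MP) := by
    rcases hs : (Finset.univ.sup fun p : Fin n × Fin n => B p.1 p.2) with _ | s
    · refine ⟨0, le_rfl, fun i j => ?_⟩
      have h := Finset.le_sup (f := fun p : Fin n × Fin n => B p.1 p.2) (Finset.mem_univ (i,j))
      rw [hs, WithBot.none_eq_bot] at h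
      exact le_trans h bot_le
    · refine ⟨max s 0, le_max_right _ _, fun i j => ?_⟩
      have h := Finset.le_sup (f := fun p : Fin n × Fin n => B p.1 p.2) (Finset.mem_univ (i,j))
      rw [hs, WithBot.some_eq_coe] at h
      exact le_trans h (WithBot.coe_le_coe.mpr (le_max_left _ _))
  have hwt : ∀ (k : ℕ) (f : ℕ → Fin n), wtW B k f ≤ ((k * r : ℝ) : MP) := by
    intro k f
    calc wtW B k f ≤ ∑ _i ∈ Finset.range k, (r : MP) :=
          Finset.sum_le_sum fun i _ => hr _ _
      _ = ((k * r : ℝ) : MP) := sum_const_coe k r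
  have hbdd : ∀ i, BddAbove (W i) := by
    intro i
    refine ⟨((n * r : ℝ) : MP), ?_⟩
    rintro w ⟨k, f, hf0, hfk, rfl⟩
    obtain ⟨k', f', hk'n, _, _, hle⟩ := shorten B hcyc k f
    refine hle.trans ((hwt k' f').trans (WithBot.coe_le_coe.mpr ?_))
    have : (k' : ℝ) ≤ (n : ℝ) := by exact_mod_cast hk'n
    nlinarith
  have hne : ∀ i, (W i).Nonempty := by
    intro i
    exact ⟨_, 1, (fun t => if t = 0 then i else j₀), by simp, by simp, rfl⟩
  set x : Fin n → MP := fun i => sSup (W i) with hx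
  have hxj : (0 : MP) ≤ x j₀ := by
    refine le_csSup (hbdd _) ⟨k₀, fc, rfl, hfc, hcrit.symm⟩
  have hxjne : x j₀ ≠ ⊥ := by
    intro h
    rw [h] at hxj
    exact absurd (le_bot_iff.mp hxj) (by simp)
  have hle1 : ∀ i, (Finset.univ.sup fun m => B i m + x m) ≤ x i := by
    intro i
    refine Finset.sup_le fun m _ => ?_
    rcases hBm : B i m with _ | c
    · rw [WithBot.none_eq_bot, WithBot.bot_add]; exact bot_le
    · rw [WithBot.some_eq_coe]
      refine coe_add_sSup_le (hne m) ?_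
      rintro w ⟨k, f, hf0, hfk, rfl⟩
      set f' : ℕ → Fin n := fun t => if t = 0 then i else f (t-1) with hf'
      have hw : wtW B (k+1) f' = (c : MP) + wtW B k f := by
        rw [wtW, Finset.sum_range_succ']
        have e0 : B (f' 0) (f' 1) = (c : MP) := by
          have : f' 0 = i := by simp [hf']
          have h1 : f' 1 = m := by simp [hf', hf0]
          rw [this, h1, hBm, WithBot.some_eq_coe]
        have eS : ∀ j, B (f' (j+1)) (f' (j+1+1)) = B (f j) (f (j+1)) := by
          intro j
          have h1 : f' (j+1) = f j := by simp [hf']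
          have h2 : f' (j+1+1) = f (j+1) := by simp [hf']
          rw [h1, h2]
        rw [e0]
        rw [Finset.sum_congr rfl fun j _ => eS j]
        rw [add_comm]
        rfl
      have hmem : (c : MP) + wtW B k f ∈ W i := by
        refine ⟨k+1, f', by simp [hf'], ?_, hw.symm⟩
        have : f' (k+1) = f k := by simp [hf']
        rw [this, hfk]
      exact le_csSup (hbdd i) hmem
  have hge1 : ∀ i, x i ≤ (Finset.univ.sup fun m => B i m + x m) := by
    intro i
    refine csSup_le (hne i) ?_
    rintro w ⟨k, f, hf0, hfk, rfl⟩
    cases k with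
    | zero =>
      have hij : i = j₀ := by rw [← hf0, hfk]
      have hw0 : wtW B 0 f = 0 := by simp [wtW]
      rw [hw0, hij]
      obtain ⟨k₁, hk₁⟩ : ∃ k₁, k₀ = k₁ + 1 := ⟨k₀ - 1, by omega⟩
      have hdec : wtW B k₀ fc = B (fc 0) (fc 1) + wtW B k₁ (fun t => fc (t+1)) := by
        rw [hk₁, wt_cons]
      have hmem2 : wtW B k₁ (fun t => fc (t+1)) ∈ W (fc 1) := by
        refine ⟨k₁, _, rfl, ?_, rfl⟩
        show fc (k₁ + 1) = j₀
        rw [← hk₁, hfc]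
      calc (0 : MP) = B (fc 0) (fc 1) + wtW B k₁ (fun t => fc (t+1)) := by rw [← hdec, hcrit]
        _ ≤ B (fc 0) (fc 1) + x (fc 1) := add_le_add le_rfl (le_csSup (hbdd _) hmem2)
        _ ≤ _ := Finset.le_sup (f := fun m => B j₀ m + x m) (Finset.mem_univ (fc 1))
    | succ k =>
      rw [wt_cons, hf0]
      have hmem2 : wtW B k (fun t => f (t+1)) ∈ W (f 1) := by
        refine ⟨k, _, rfl, ?_, rfl⟩
        show f (k + 1) = j₀
        exact hfk
      calc B i (f 1) + wtW B k (fun t => f (t+1))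
          ≤ B i (f 1) + x (f 1) := add_le_add le_rfl (le_csSup (hbdd _) hmem2)
        _ ≤ _ := Finset.le_sup (f := fun m => B i m + x m) (Finset.mem_univ (f 1))
  exact ⟨x, ⟨j₀, hxjne⟩, fun i => le_antisymm (hle1 i) (hge1 i)⟩

lemma crit_walk {n : ℕ} (hn : 0 < n) (A : Matrix (Fin n) (Fin n) MP) (l : ℝ)
    (hA : mcm A = (l : MP)) :
    ∃ k₀ : ℕ, ∃ fc : ℕ → Fin n, 0 < k₀ ∧ fc k₀ = fc 0 ∧
      wtW (fun i j => A i j + ((-l : ℝ) : MP)) k₀ fc = 0 := by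
  obtain ⟨k, f, hk, hcw⟩ := mcm_attained hn A l hA
  set fc : ℕ → Fin n := fun t => f (t % k) with hfcdef
  have hfc : fc k = fc 0 := by simp [hfcdef, Nat.mod_self]
  refine ⟨k, fc, hk, hfc, ?_⟩
  have h1 : cwtW (fun i j => A i j + ((-l : ℝ) : MP)) k fc
      = cwtW (fun i j => A i j + ((-l : ℝ) : MP)) k f := by
    unfold cwtW
    refine Finset.sum_congr rfl fun i hi => ?_
    rw [Finset.mem_range] at hi
    have e1 : fc i = f i := by rw [hfcdef]; simp [Nat.mod_eq_of_lt hi]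
    have e2 : fc ((i+1) % k) = f ((i+1) % k) := by
      rw [hfcdef]
      simp only []
      rw [Nat.mod_eq_of_lt (Nat.mod_lt _ hk)]
    rw [e1, e2]
  refine ((wt_eq_cwt _ _ _ hfc).trans (h1.trans (cwtB_eq A l k f))).trans ?_
  rw [hcw, ← WithBot.coe_add]
  norm_cast
  ring

theorem exists_eigenvector_mcm' (n : ℕ) (hn : 0 < n) (A : Matrix (Fin n) (Fin n) MP) :
    ∃ x : Fin n → MP, (∃ i, x i ≠ ⊥) ∧
      (fun i => Finset.univ.sup fun k => A i k + x k) = fun i => mcm A + x i := by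
  classical
  rcases hA : mcm A with _ | l
  · -- bottom case: some column is all ⊥
    rw [WithBot.none_eq_bot] at hA
    have hbot : ∃ m, ∀ i, A i m = ⊥ := by
      by_contra hcon
      push_neg at hcon
      choose g hg using hcon
      set f : ℕ → Fin n := fun t => g^[t] ⟨0, hn⟩ with hfdef
      have hstep : ∀ t, A (f (t+1)) (f t) ≠ ⊥ := by
        intro t
        have : f (t+1) = g (f t) := by
          rw [hfdef]
          simp [Function.iterate_succ_apply']
        rw [this]
        exact hg _
      obtain ⟨a', b', hab', hfab'⟩ := Fintype.exists_ne_map_eq_of_card_lt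
        (fun i : Fin (n+1) => f i.val) (by simp)
      obtain ⟨a, b, hab, hfab⟩ : ∃ a b : ℕ, a < b ∧ f b = f a := by
        rcases hab'.lt_or_gt with h | h
        · exact ⟨a'.val, b'.val, h, hfab'.symm⟩
        · exact ⟨b'.val, a'.val, h, hfab'⟩
      set d := b - a with hddef
      have hd : 0 < d := by omega
      set h : Fin d → Fin n := fun i => f (b - i.val) with hhdef
      have hterm : ∀ i : Fin d, A (h i) (h ⟨(i.1 + 1) % d, Nat.mod_lt _ hd⟩) ≠ ⊥ := by
        intro i
        have hi := i.isLt
        by_cases hc : i.val + 1 < d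
        · have hmod : (i.val + 1) % d = i.val + 1 := Nat.mod_eq_of_lt hc
          have e1 : h i = f ((b - i.val - 1) + 1) := by
            rw [hhdef]; simp only []; congr 1; omega
          have e2 : (h ⟨(i.1 + 1) % d, Nat.mod_lt _ hd⟩ : Fin n) = f (b - i.val - 1) := by
            rw [hhdef]; simp only []; congr 1; rw [hmod]; omega
          rw [e1, e2]
          exact hstep _
        · have hid : i.val + 1 = d := by omega
          have hmod : (i.val + 1) % d = 0 := by rw [hid, Nat.mod_self]
          have e1 : h i = f (a + 1) := by
            rw [hhdef]; simp only []; congr 1; omega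
          have e2 : (h ⟨(i.1 + 1) % d, Nat.mod_lt _ hd⟩ : Fin n) = f a := by
            rw [hhdef]; simp only []; rw [hmod]
            simp only [Nat.sub_zero]
            exact hfab
          rw [e1, e2]
          exact hstep _
      have hsum : (∑ i : Fin d, A (h i) (h ⟨(i.1 + 1) % d, Nat.mod_lt _ hd⟩)) ≠ ⊥ := by
        intro hbot
        obtain ⟨i, _, hib⟩ := WithBot.sum_eq_bot_iff.mp hbot
        exact hterm i hib
      set s := ∑ i : Fin d, A (h i) (h ⟨(i.1 + 1) % d, Nat.mod_lt _ hd⟩) with hsdef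
      have hmem : WithBot.map (fun w : ℝ => w / (d : ℝ)) s ∈ mcmSet A := ⟨d, hd, h, rfl⟩
      have hle := le_csSup (bddAbove_mcmSet A) hmem
      rw [mcm_eq] at hA
      rw [hA] at hle
      rcases hs : s with _ | w
      · exact hsum hs
      · rw [hs, WithBot.some_eq_coe, WithBot.map_coe] at hle
        exact absurd (le_bot_iff.mp hle) (by simp)
    obtain ⟨m, hm⟩ := hbot
    set x : Fin n → MP := fun j => if ∀ i, A i j = ⊥ then (0 : MP) else ⊥ with hxdef
    have hxm : x m ≠ ⊥ := by
      rw [hxdef]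
      simp only [if_pos hm]
      simp
    refine ⟨x, ⟨m, hxm⟩, ?_⟩
    funext i
    show (Finset.univ.sup fun k => A i k + x k) = (⊥ : MP) + x i
    rw [WithBot.bot_add]
    rw [le_bot_iff.mp (Finset.sup_le fun j _ => ?_)]
    by_cases hc : ∀ i', A i' j = ⊥
    · rw [hc i, WithBot.bot_add]
    · have : x j = ⊥ := by rw [hxdef]; simp only [if_neg hc]
      rw [this, WithBot.add_bot]
  · -- finite case
    rw [WithBot.some_eq_coe] at hA
    set B : Matrix (Fin n) (Fin n) MP := fun i j => A i j + ((-l : ℝ) : MP) with hBdef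
    obtain ⟨k₀, fc, hk₀, hfc, hcw⟩ := crit_walk hn A l hA
    obtain ⟨x, hx, heig⟩ := eigen_zero hn B (Bcyc A l hA) k₀ fc hk₀ hfc hcw
    refine ⟨x, hx, ?_⟩
    funext i
    have hAB : ∀ m, A i m + x m = (l : MP) + (B i m + x m) := by
      intro m
      have key : (l : MP) + B i m = A i m := by
        rw [hBdef]
        simp only []
        rw [add_comm (A i m), ← add_assoc, ← WithBot.coe_add]
        norm_num
      rw [← add_assoc, key]
    rw [Finset.sup_congr rfl fun m _ => hAB m]
    have hdist : (Finset.univ.sup fun m => (l : MP) + (B i m + x m))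
        = (l : MP) + (Finset.univ.sup fun m => B i m + x m) := by
      rw [Finset.comp_sup_eq_sup_comp (fun y : MP => (l : MP) + y)]
      · rfl
      · intro a b
        rcases le_total a b with h | h
        · rw [sup_eq_right.mpr h, sup_eq_right.mpr (add_le_add (le_refl (l : MP)) h)]
        · rw [sup_eq_left.mpr h, sup_eq_left.mpr (add_le_add (le_refl (l : MP)) h)]
      · exact WithBot.add_bot _
    rw [hdist, heig i, WithBot.some_eq_coe]

end Helpers

/-- Every `n × n` max-plus matrix (`n ≥ 1`) has an eigenvector `x ≠ ε`
associated with the maximum cycle mean `λ(A)`. -/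
theorem exists_eigenvector_mcm (n : ℕ) (hn : 0 < n) (A : Matrix (Fin n) (Fin n) MP) :
    ∃ x : Fin n → MP, (∃ i, x i ≠ ⊥) ∧
      mpMulVec A x = fun i => mcm A + x i := by
  obtain ⟨x, hx, heq⟩ := exists_eigenvector_mcm' n hn A
  exact ⟨x, hx, heq⟩
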